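/- Let $n,r,k,t$ be positive integers with $n\ge r\ge t+1$ and $k\ge2$. Suppose $\mathcal{F}\subset\mathcal{L}_{n,r,k}$ is a maximal $t$-intersecting family with $\tau_t(\mathcal{F})=t+1$. Let $\mathcal{T}$ be the set of $t$-covers of $\mathcal{F}$ of size $t+1$ and $M=\bigcup_{T\in\mathcal{T}}T$, $\ell=|M|$. If $\mathcal{T}$ has a $t$-cover $S$ of size $t$, then $M\in\mathcal{L}_{n,\ell,k}$ with $t+1\le\ell\le\min\{r+1,n\}$, and every $F\in\mathcal{F}$ not containing $S$ satisfies $|F\cap M|=\ell-1$. -/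

import Mathlib

open Finset

attribute [local instance] Classical.propDecidable

/-- The ground set `[n] × [k]`. -/
def box (n k : ℕ) : Finset (ℕ × ℕ) := Finset.Icc 1 n ×ˢ Finset.Icc 1 k

/-- A `k`-signed set on `[n]`: a subset of `[n] × [k]` with pairwise distinct first coordinates. -/
def IsSigned (n k : ℕ) (T : Finset (ℕ × ℕ)) : Prop :=
  T ⊆ box n k ∧ (T.image Prod.fst).card = T.card

/-- `L n r k`: the collection of `k`-signed `r`-sets on `[n]`. -/
def L (n r k : ℕ) : Finset (Finset (ℕ × ℕ)) :=
  (box n k).powerset.filter (fun F => F.card = r ∧ (F.image Prod.fst).card = r)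

/-- A family is `t`-intersecting if any two members meet in at least `t` elements. -/
def IsTIntersecting (t : ℕ) (F : Finset (Finset (ℕ × ℕ))) : Prop :=
  ∀ A ∈ F, ∀ B ∈ F, t ≤ (A ∩ B).card

/-- `T` is a `t`-cover of the family `F`: a `k`-signed set meeting every member in ≥ `t` points. -/
def IsTCover (n k t : ℕ) (F : Finset (Finset (ℕ × ℕ))) (T : Finset (ℕ × ℕ)) : Prop :=
  IsSigned n k T ∧ ∀ A ∈ F, t ≤ (T ∩ A).card

/-- `F` is a maximal `t`-intersecting subfamily of `L n r k`. -/
def IsMaximalTIntersecting (n r k t : ℕ) (F : Finset (Finset (ℕ × ℕ))) : Prop :=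
  F ⊆ L n r k ∧ IsTIntersecting t F ∧
    ∀ G ⊆ L n r k, IsTIntersecting t G → F ⊆ G → G = F

/-- A `t`-intersecting family is trivial if all members contain a fixed `k`-signed `t`-set. -/
def IsTrivial (n k t : ℕ) (F : Finset (Finset (ℕ × ℕ))) : Prop :=
  ∃ T, IsSigned n k T ∧ T.card = t ∧ ∀ A ∈ F, T ⊆ A

/-- `Msig d = {(1,1),(2,1),…,(d,1)}`. -/
def Msig (d : ℕ) : Finset (ℕ × ℕ) := (Finset.Icc 1 d).image (fun x => (x, 1))

/-- The family `H₁(n,r,k,ℓ,t)`. -/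
def H1 (n r k l t : ℕ) : Finset (Finset (ℕ × ℕ)) :=
  (L n r k).filter (fun F =>
    (Msig t ⊆ F ∧ t + 1 ≤ (F ∩ Msig l).card) ∨
    (¬ Msig t ⊆ F ∧ (F ∩ Msig l).card = l - 1))

/-- The family `H₂(n,r,k,c,t)`. -/
def H2 (n r k c t : ℕ) : Finset (Finset (ℕ × ℕ)) :=
  (L n r k).filter (fun F =>
    (Msig t ⊆ F ∧ t + 1 ≤ (F ∩ Msig r).card) ∨
    (F ∩ Msig r = Msig t ∧ Msig c \ Msig r ⊆ F) ∨
    (¬ Msig t ⊆ F ∧ (F ∩ Msig r).card = r - 1 ∧ (F ∩ (Msig c \ Msig r)).card = 1))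

/-- The set of all `t`-covers of `F` of size `t+1`. -/
noncomputable def TauSet (n k t : ℕ) (F : Finset (Finset (ℕ × ℕ))) : Finset (Finset (ℕ × ℕ)) :=
  (box n k).powerset.filter (fun T => IsTCover n k t F T ∧ T.card = t + 1)
theorem union_of_covers_case2 (n r k t : ℕ) (hn : 0 < n) (ht : 0 < t)
    (hk : 2 ≤ k) (htr : t + 1 ≤ r) (hrn : r ≤ n)
    (F : Finset (Finset (ℕ × ℕ))) (hF : IsMaximalTIntersecting n r k t F)
    (hex : ∃ T, IsTCover n k t F T ∧ T.card = t + 1)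
    (hmin : ∀ T, IsTCover n k t F T → t + 1 ≤ T.card)
    (S : Finset (ℕ × ℕ)) (hS : IsTCover n k t (TauSet n k t F) S) (hSc : S.card = t) :
    IsSigned n k ((TauSet n k t F).sup id) ∧
      t + 1 ≤ ((TauSet n k t F).sup id).card ∧
      ((TauSet n k t F).sup id).card ≤ min (r + 1) n ∧
      ∀ A ∈ F, ¬ S ⊆ A → (A ∩ (TauSet n k t F).sup id).card = ((TauSet n k t F).sup id).card - 1 := by
  classical
  set M := (TauSet n k t F).sup id with hMdef
  obtain ⟨T₀, hT₀cov, hT₀c⟩ := hex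
  have hT₀mem : T₀ ∈ TauSet n k t F := by
    simp only [TauSet, Finset.mem_filter, Finset.mem_powerset]
    exact ⟨hT₀cov.1.1, hT₀cov, hT₀c⟩
  have hmemM : ∀ x : ℕ × ℕ, x ∈ M ↔ ∃ T ∈ TauSet n k t F, x ∈ T := by
    intro x; simp [hMdef, Finset.mem_sup]
  have hTau : ∀ T ∈ TauSet n k t F, IsTCover n k t F T ∧ T.card = t + 1 := by
    intro T hT
    simp only [TauSet, Finset.mem_filter, Finset.mem_powerset] at hT
    exact hT.2
  -- S is contained in every member of TauSet
  have hSsub : ∀ T ∈ TauSet n k t F, S ⊆ T := by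
    intro T hT
    have h1 : t ≤ (S ∩ T).card := hS.2 T hT
    have h2 : S ∩ T = S :=
      Finset.eq_of_subset_of_card_le (Finset.inter_subset_left) (by omega)
    rw [← h2]; exact Finset.inter_subset_right
  have hSM : S ⊆ M := fun x hx => (hmemM x).2 ⟨T₀, hT₀mem, hSsub T₀ hT₀mem hx⟩
  have hT₀M : T₀ ⊆ M := fun x hx => (hmemM x).2 ⟨T₀, hT₀mem, hx⟩
  -- every element of M \ S gives a cover insert x S in TauSet
  have hins : ∀ x ∈ M, x ∉ S → insert x S ∈ TauSet n k t F := by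
    intro x hxM hxS
    obtain ⟨T, hT, hxT⟩ := (hmemM x).1 hxM
    have hST : S ⊆ T := hSsub T hT
    have hsub : insert x S ⊆ T := Finset.insert_subset hxT hST
    have hcard : T.card ≤ (insert x S).card := by
      rw [Finset.card_insert_of_notMem hxS, hSc, (hTau T hT).2]
    have : insert x S = T := Finset.eq_of_subset_of_card_le hsub hcard
    rwa [this]
  -- there is a member of F not containing S
  have hA₀ : ∃ A ∈ F, ¬ S ⊆ A := by
    by_contra h
    push_neg at h
    have : IsTCover n k t F S := by
      refine ⟨hS.1, fun A hA => ?_⟩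
      have : S ∩ A = S := Finset.inter_eq_left.2 (h A hA)
      rw [this, hSc]
    have := hmin S this
    omega
  obtain ⟨A₀, hA₀F, hA₀S⟩ := hA₀
  -- key: for A ∈ F not containing S, M \ S ⊆ A and |A ∩ S| = t - 1
  have hkey : ∀ A ∈ F, ¬ S ⊆ A → (M \ S ⊆ A ∧ (A ∩ S).card = t - 1) := by
    intro A hA hSA
    have hASlt : (A ∩ S).card < t := by
      have hss : A ∩ S ⊂ S := by
        refine Finset.ssubset_iff_subset_ne.2 ⟨Finset.inter_subset_right, ?_⟩
        intro h
        exact hSA (by rw [← h]; exact Finset.inter_subset_left)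
      have := Finset.card_lt_card hss
      omega
    have hdiff : M \ S ⊆ A := by
      intro x hx
      obtain ⟨hxM, hxS⟩ := Finset.mem_sdiff.1 hx
      have hTmem := hins x hxM hxS
      have hcov := (hTau _ hTmem).1.2 A hA
      by_contra hxA
      have hsub2 : insert x S ∩ A ⊆ S ∩ A := by
        intro y hy
        rcases Finset.mem_inter.1 hy with ⟨hy1, hy2⟩
        rcases Finset.mem_insert.1 hy1 with rfl | hyS
        · exact absurd hy2 hxA
        · exact Finset.mem_inter.2 ⟨hyS, hy2⟩
      have := Finset.card_le_card hsub2
      rw [Finset.inter_comm S A] at this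
      omega
    have hge : t - 1 ≤ (A ∩ S).card := by
      -- pick some x ∈ M \ S
      have hMS : (M \ S).Nonempty := by
        have hc : S.card < M.card := by
          have := Finset.card_le_card hT₀M
          omega
        have : 0 < (M \ S).card := by
          rw [Finset.card_sdiff_of_subset hSM]; omega
        exact Finset.card_pos.1 this
      obtain ⟨x, hx⟩ := hMS
      obtain ⟨hxM, hxS⟩ := Finset.mem_sdiff.1 hx
      have hTmem := hins x hxM hxS
      have hcov := (hTau _ hTmem).1.2 A hA
      have : insert x S ∩ A ⊆ insert x (S ∩ A) := by
        intro y hy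
        rcases Finset.mem_inter.1 hy with ⟨hy1, hy2⟩
        rcases Finset.mem_insert.1 hy1 with rfl | hyS
        · exact Finset.mem_insert_self _ _
        · exact Finset.mem_insert_of_mem (Finset.mem_inter.2 ⟨hyS, hy2⟩)
      have h1 := Finset.card_le_card this
      have h2 := Finset.card_insert_le x (S ∩ A)
      have h3 : (S ∩ A).card = (A ∩ S).card := by rw [Finset.inter_comm]
      omega
    exact ⟨hdiff, by omega⟩
  -- cardinality of A ∩ M for such A
  have hcount : ∀ A ∈ F, ¬ S ⊆ A → (A ∩ M).card = M.card - 1 := by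
    intro A hA hSA
    obtain ⟨hdiff, hAS⟩ := hkey A hA hSA
    have heq : A ∩ M = (A ∩ S) ∪ (M \ S) := by
      ext y
      simp only [Finset.mem_inter, Finset.mem_union, Finset.mem_sdiff]
      constructor
      · rintro ⟨hyA, hyM⟩
        by_cases hyS : y ∈ S
        · exact Or.inl ⟨hyA, hyS⟩
        · exact Or.inr ⟨hyM, hyS⟩
      · rintro (⟨hyA, hyS⟩ | hy)
        · exact ⟨hyA, hSM hyS⟩
        · exact ⟨hdiff (Finset.mem_sdiff.2 hy), hy.1⟩
    have hdisj : Disjoint (A ∩ S) (M \ S) :=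
      Finset.disjoint_sdiff.mono_left Finset.inter_subset_right
    rw [heq, Finset.card_union_of_disjoint hdisj, Finset.card_sdiff_of_subset hSM, hAS, hSc]
    have hMt : t + 1 ≤ M.card := by
      have := Finset.card_le_card hT₀M; omega
    omega
  -- M is signed
  have hMbox : M ⊆ box n k := by
    intro x hx
    obtain ⟨T, hT, hxT⟩ := (hmemM x).1 hx
    exact (hTau T hT).1.1.1 hxT
  have hA₀L : A₀ ∈ L n r k := hF.1 hA₀F
  have hA₀L' : A₀.card = r ∧ (A₀.image Prod.fst).card = A₀.card := by
    simp only [L, Finset.mem_filter, Finset.mem_powerset] at hA₀L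
    exact ⟨hA₀L.2.1, by rw [hA₀L.2.1, hA₀L.2.2]⟩
  have hA₀inj : Set.InjOn Prod.fst (A₀ : Set (ℕ × ℕ)) := Finset.card_image_iff.1 hA₀L'.2
  have hSinj : Set.InjOn Prod.fst (S : Set (ℕ × ℕ)) := Finset.card_image_iff.1 hS.1.2
  have hMsigned : IsSigned n k M := by
    refine ⟨hMbox, Finset.card_image_iff.2 ?_⟩
    intro x hx y hy hxy
    simp only [Finset.coe_sort_coe, Finset.mem_coe] at hx hy
    by_cases hxS : x ∈ S <;> by_cases hyS : y ∈ S
    · exact hSinj hxS hyS hxy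
    · -- x ∈ S, y ∉ S : use signedness of insert y S
      have hT := hins y hy hyS
      have hTsig := (hTau _ hT).1.1
      have hinj : Set.InjOn Prod.fst ((insert y S : Finset (ℕ × ℕ)) : Set (ℕ × ℕ)) := Finset.card_image_iff.1 hTsig.2
      exact hinj (by simp [hxS]) (by simp) hxy
    · have hT := hins x hx hxS
      have hTsig := (hTau _ hT).1.1
      have hinj : Set.InjOn Prod.fst ((insert x S : Finset (ℕ × ℕ)) : Set (ℕ × ℕ)) := Finset.card_image_iff.1 hTsig.2
      exact hinj (by simp) (by simp [hyS]) hxy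
    · have hdiff := (hkey A₀ hA₀F hA₀S).1
      have hxA : x ∈ A₀ := hdiff (Finset.mem_sdiff.2 ⟨hx, hxS⟩)
      have hyA : y ∈ A₀ := hdiff (Finset.mem_sdiff.2 ⟨hy, hyS⟩)
      exact hA₀inj hxA hyA hxy
  -- bounds
  have hMlb : t + 1 ≤ M.card := by
    have := Finset.card_le_card hT₀M; omega
  have hMub1 : M.card ≤ r + 1 := by
    have h1 := hcount A₀ hA₀F hA₀S
    have h2 : (A₀ ∩ M).card ≤ A₀.card := Finset.card_le_card Finset.inter_subset_left
    rw [hA₀L'.1] at h2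
    omega
  have hMub2 : M.card ≤ n := by
    have him : M.image Prod.fst ⊆ Finset.Icc 1 n := by
      intro a ha
      obtain ⟨x, hx, rfl⟩ := Finset.mem_image.1 ha
      have := hMbox hx
      simp only [_root_.box, Finset.mem_product] at this
      exact this.1
    have := Finset.card_le_card him
    rw [hMsigned.2] at this
    simpa using this
  exact ⟨hMsigned, hMlb, le_min hMub1 hMub2, hcount⟩
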